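/- Let $I = [a,b]$ with $a < b$, let $f \colon X \to \mathbb{R}$ be a bounded uniformly continuous function on a metric space $X$ on which a one-parameter group $\{u(s)\}_{s\in\mathbb{R}}$ acts by uniformly continuous transformations, and let $\lambda_i$ be probability measures on $X$ of the form $\int f\,d\lambda_i = \frac{1}{|I|}\int_I f(\Psi_i(t))\,dt$ for measurable $\Psi_i \colon I \to X$. Fix $s_0 \in \mathbb{R}$ and suppose there are $\xi_i \to 0$ and a sequence $\epsilon_i \to 0$ such that $\sup_{t \in [a, b-\xi_i]} |f(\Psi_i(t + \xi_i)) - f(u(s_0)\Psi_i(t))| \leq \epsilon_i$. If $\lambda_i \to \lambda$ weak-*, then $\int_X f(u(s_0) y)\,d\lambda(y) = \int_X f(y)\,d\lambda(y)$. -/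

import Mathlib

open MeasureTheory Filter Topology
open scoped BoundedContinuousFunction

lemma aux_ii {F : ℝ → ℝ} {C : ℝ} (hF : Measurable F)
    (hB : ∀ t, |F t| ≤ C) (p q : ℝ) : IntervalIntegrable F volume p q := by
  refine (intervalIntegrable_const (c := C)).mono_fun
    hF.aestronglyMeasurable.restrict ?_
  exact Filter.Eventually.of_forall fun t => by
    simpa [Real.norm_eq_abs, abs_of_nonneg (le_trans (abs_nonneg _) (hB t))] using hB t

lemma shift_estimate {F G : ℝ → ℝ} {a b ξ M ε : ℝ} (hab : a < b)
    (hF : Measurable F) (hG : Measurable G)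
    (hFb : ∀ t, |F t| ≤ M) (hGb : ∀ t, |G t| ≤ M)
    (hξ0 : 0 ≤ ξ) (hξle : ξ ≤ b - a)
    (happ : ∀ t ∈ Set.Icc a (b - ξ), |F (t + ξ) - G t| ≤ ε) :
    |(∫ t in a..b, G t) - ∫ t in a..b, F t| ≤ 2 * ξ * M + (b - a) * ε := by
  have hε0 : 0 ≤ ε := le_trans (abs_nonneg _) (happ a ⟨le_refl a, by linarith⟩)
  have hM0 : 0 ≤ M := le_trans (abs_nonneg _) (hFb a)
  have iF : ∀ p q, IntervalIntegrable F volume p q := aux_ii hF hFb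
  have iG : ∀ p q, IntervalIntegrable G volume p q := aux_ii hG hGb
  have hFs : Measurable (fun t => F (t + ξ)) := hF.comp (measurable_add_const ξ)
  have iFs : ∀ p q, IntervalIntegrable (fun t => F (t + ξ)) volume p q :=
    aux_ii hFs (fun t => hFb _)
  have h1 : (∫ t in a..b, F t) = (∫ t in a..(a+ξ), F t) + ∫ t in (a+ξ)..b, F t :=
    (intervalIntegral.integral_add_adjacent_intervals (iF _ _) (iF _ _)).symm
  have h2 : (∫ t in a..b, G t) = (∫ t in a..(b-ξ), G t) + ∫ t in (b-ξ)..b, G t :=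
    (intervalIntegral.integral_add_adjacent_intervals (iG _ _) (iG _ _)).symm
  have h3 : (∫ t in (a+ξ)..b, F t) = ∫ t in a..(b-ξ), F (t+ξ) := by
    rw [intervalIntegral.integral_comp_add_right]
    norm_num
  have b1 : |∫ t in a..(a+ξ), F t| ≤ ξ * M := by
    have := intervalIntegral.norm_integral_le_of_norm_le_const (C := M)
      (f := F) (a := a) (b := a + ξ) (fun x _ => by simpa [Real.norm_eq_abs] using hFb x)
    simpa [Real.norm_eq_abs, abs_of_nonneg hξ0, mul_comm] using this
  have b2 : |∫ t in (b-ξ)..b, G t| ≤ ξ * M := by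
    have := intervalIntegral.norm_integral_le_of_norm_le_const (C := M)
      (f := G) (a := b - ξ) (b := b) (fun x _ => by simpa [Real.norm_eq_abs] using hGb x)
    have h' : |b - (b - ξ)| = ξ := by rw [abs_of_nonneg] <;> linarith
    simpa [Real.norm_eq_abs, abs_of_nonneg hξ0, mul_comm] using this
  have b3 : |(∫ t in a..(b-ξ), F (t+ξ)) - ∫ t in a..(b-ξ), G t| ≤ (b - a) * ε := by
    rw [← intervalIntegral.integral_sub (iFs _ _) (iG _ _)]
    have := intervalIntegral.norm_integral_le_of_norm_le_const (C := ε)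
      (f := fun t => F (t + ξ) - G t) (a := a) (b := b - ξ) (fun x hx => by
        have hx' : x ∈ Set.Icc a (b - ξ) := by
          rw [Set.uIoc_of_le (by linarith)] at hx
          exact ⟨hx.1.le, hx.2⟩
        simpa [Real.norm_eq_abs] using happ x hx')
    have h' : |b - ξ - a| ≤ b - a := by rw [abs_of_nonneg] <;> linarith
    calc |_| ≤ ε * |b - ξ - a| := by simpa [Real.norm_eq_abs] using this
      _ ≤ (b - a) * ε := by nlinarith
  have key : (∫ t in a..b, G t) - ∫ t in a..b, F t =
      ((∫ t in a..(b-ξ), G t) - ∫ t in a..(b-ξ), F (t+ξ))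
      + (∫ t in (b-ξ)..b, G t) - ∫ t in a..(a+ξ), F t := by
    rw [h1, h2, h3]; ring
  rw [key]
  have := abs_sub_comm (∫ t in a..(b-ξ), F (t+ξ)) (∫ t in a..(b-ξ), G t)
  calc |_| ≤ |(∫ t in a..(b-ξ), G t) - ∫ t in a..(b-ξ), F (t+ξ)|
        + |∫ t in (b-ξ)..b, G t| + |∫ t in a..(a+ξ), F t| := by
        exact (abs_sub _ _).trans (add_le_add_left (abs_add_le _ _) _)
    _ ≤ (b - a) * ε + ξ * M + ξ * M := by
        have b3' : |(∫ t in a..(b-ξ), G t) - ∫ t in a..(b-ξ), F (t+ξ)| ≤ (b-a)*ε := by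
          rw [abs_sub_comm]; exact b3
        gcongr <;> first | exact b3' | exact b2 | exact b1
    _ = 2 * ξ * M + (b - a) * ε := by ring

/-- Abstract shifting argument from Theorem 3.1: if probability measures `μᵢ` are the
parameter measures of curves `Ψᵢ : [a,b] → X`, a small shift `t ↦ t + ξᵢ` of the curves
approximates the action of `u s₀` up to errors `εᵢ → 0`, and `μᵢ → μ` weak-*, then the
limit measure `μ` is invariant under `u s₀` (tested against `f`). -/
theorem limit_measure_invariant_of_shift
    (X : Type*) [MetricSpace X] [MeasurableSpace X] [BorelSpace X]
    (a b : ℝ) (hab : a < b)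
    (u : ℝ → X → X) (s₀ : ℝ)
    (hu : UniformContinuous (u s₀))
    (f : X →ᵇ ℝ) (hf : UniformContinuous f)
    (Ψ : ℕ → ℝ → X) (hΨ : ∀ i, Measurable (Ψ i))
    (μ : ℕ → Measure X) (hμprob : ∀ i, IsProbabilityMeasure (μ i))
    -- `μᵢ` is the normalized parameter measure of the curve `Ψᵢ`
    (hμdef : ∀ (i : ℕ) (g : X →ᵇ ℝ),
      ∫ x, g x ∂(μ i) = (1 / (b - a)) * ∫ t in Set.Icc a b, g (Ψ i t))
    (ξ : ℕ → ℝ) (hξ0 : ∀ i, 0 ≤ ξ i) (hξ : Tendsto ξ atTop (𝓝 0))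
    (ε : ℕ → ℝ) (hε : Tendsto ε atTop (𝓝 0))
    -- the shifted curve approximates the `u s₀`-translate of the curve
    (happrox : ∀ i, ∀ t ∈ Set.Icc a (b - ξ i),
      |f (Ψ i (t + ξ i)) - f (u s₀ (Ψ i t))| ≤ ε i)
    (μlim : Measure X) [IsProbabilityMeasure μlim]
    (hconv : ∀ g : X →ᵇ ℝ,
      Tendsto (fun i => ∫ x, g x ∂(μ i)) atTop (𝓝 (∫ x, g x ∂μlim))) :
    ∫ x, f (u s₀ x) ∂μlim = ∫ x, f x ∂μlim := by
  have hba : (0:ℝ) < b - a := by linarith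
  set g : X →ᵇ ℝ := f.compContinuous ⟨u s₀, hu.continuous⟩ with hgdef
  have hgx : ∀ x, g x = f (u s₀ x) := fun x => rfl
  have key : ∀ i, ξ i ≤ b - a →
      |∫ x, g x ∂(μ i) - ∫ x, f x ∂(μ i)|
        ≤ (1/(b-a)) * (2 * ξ i * ‖f‖ + (b-a) * ε i) := by
    intro i hi
    have hFmeas : Measurable (fun t => f (Ψ i t)) := f.continuous.measurable.comp (hΨ i)
    have hGmeas : Measurable (fun t => f (u s₀ (Ψ i t))) :=
      f.continuous.measurable.comp (hu.continuous.measurable.comp (hΨ i))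
    have hFb : ∀ t, |f (Ψ i t)| ≤ ‖f‖ := fun t => by
      simpa [Real.norm_eq_abs] using f.norm_coe_le_norm (Ψ i t)
    have hGb : ∀ t, |f (u s₀ (Ψ i t))| ≤ ‖f‖ := fun t => by
      simpa [Real.norm_eq_abs] using f.norm_coe_le_norm (u s₀ (Ψ i t))
    have e1 : ∫ t in Set.Icc a b, g (Ψ i t) = ∫ t in a..b, f (u s₀ (Ψ i t)) := by
      rw [intervalIntegral.integral_of_le hab.le, integral_Icc_eq_integral_Ioc]
      rfl
    have e2 : ∫ t in Set.Icc a b, f (Ψ i t) = ∫ t in a..b, f (Ψ i t) := by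
      rw [intervalIntegral.integral_of_le hab.le, integral_Icc_eq_integral_Ioc]
    rw [hμdef i g, hμdef i f, ← mul_sub, abs_mul,
      abs_of_pos (by positivity : (0:ℝ) < 1/(b-a)), e1, e2]
    gcongr
    exact shift_estimate hab hFmeas hGmeas hFb hGb (hξ0 i) hi (happrox i)
  have hbound : ∀ᶠ i in atTop,
      ‖∫ x, g x ∂(μ i) - ∫ x, f x ∂(μ i)‖
        ≤ (1/(b-a)) * (2 * ξ i * ‖f‖ + (b-a) * ε i) := by
    filter_upwards [hξ.eventually_le_const (by linarith : (0:ℝ) < b - a)] with i hi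
    exact key i hi
  have hc : Tendsto (fun i => (1/(b-a)) * (2 * ξ i * ‖f‖ + (b-a) * ε i)) atTop (𝓝 0) := by
    have h1 : Tendsto (fun i => 2 * ξ i * ‖f‖ + (b-a) * ε i) atTop (𝓝 0) := by
      have := ((hξ.const_mul 2).mul_const ‖f‖).add (hε.const_mul (b-a))
      simpa using this
    simpa using h1.const_mul (1/(b-a))
  have hD : Tendsto (fun i => ∫ x, g x ∂(μ i) - ∫ x, f x ∂(μ i)) atTop (𝓝 0) :=
    squeeze_zero_norm' hbound hc
  have h3 : Tendsto (fun i => ∫ x, g x ∂(μ i)) atTop (𝓝 (∫ x, f x ∂μlim)) := by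
    have := hD.add (hconv f)
    simpa using this
  have h4 := tendsto_nhds_unique (hconv g) h3
  simpa [hgx] using h4
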